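/- Let F = ⟨f_1,…,f_r⟩ be a flip sequence realizing a shortest path T_init = T_0 → T_1 → ⋯ → T_r = T_final, and fix a target triangulation T_final. Suppose e is a diagonal of both T_{i−1} and T_i for some 1 ≤ i ≤ r, e is not a free-diagonal of T_{i−1} with respect to T_final, and e is a free-diagonal of T_i with respect to T_final. Then f_i^→, the diagonal created by the i-th flip, is a neighbor of e in T_i. -/

import Mathlib

open Finset

/-- Two vertices of the convex `m`-gon are adjacent in the cyclic order. -/
def PolyAdj (m : ℕ) (a b : Fin m) : Prop :=
  (a.val + 1) % m = b.val ∨ (b.val + 1) % m = a.val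

/-- `e` is a diagonal of the convex `m`-gon: an unordered pair of distinct,
non-adjacent vertices. -/
def IsDiagonal (m : ℕ) (e : Finset (Fin m)) : Prop :=
  ∃ a b : Fin m, a ≠ b ∧ ¬ PolyAdj m a b ∧ e = {a, b}

/-- The cyclic distance from `a` to `x`, going forwards in the cyclic order. -/
def cycDist (m : ℕ) (a x : Fin m) : ℕ := (x.val + m - a.val) % m

/-- `x` lies strictly between `a` and `b` in the cyclic order. -/
def CycBtw (m : ℕ) (a x b : Fin m) : Prop :=
  0 < cycDist m a x ∧ cycDist m a x < cycDist m a b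

/-- Two chords cross: their endpoints strictly interleave in the cyclic order. -/
def Cross (m : ℕ) (e₁ e₂ : Finset (Fin m)) : Prop :=
  ∃ a b c d : Fin m, e₁ = {a, b} ∧ e₂ = {c, d} ∧ CycBtw m a c b ∧ CycBtw m b d a

/-- A triangulation of the convex `m`-gon: a maximal set of pairwise
non-crossing diagonals. -/
structure Triangulation (m : ℕ) where
  diagonals : Finset (Finset (Fin m))
  isDiagonal : ∀ e ∈ diagonals, IsDiagonal m e
  noncross : ∀ e₁ ∈ diagonals, ∀ e₂ ∈ diagonals, ¬ Cross m e₁ e₂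
  maximal : ∀ e, IsDiagonal m e → (∀ e' ∈ diagonals, ¬ Cross m e e') → e ∈ diagonals

/-- `e` is a side in the triangulation `T`: either an edge of the polygon
(between cyclically adjacent vertices) or a diagonal of `T`. -/
def IsSide (m : ℕ) (T : Triangulation m) (e : Finset (Fin m)) : Prop :=
  (∃ a b : Fin m, PolyAdj m a b ∧ e = {a, b}) ∨ e ∈ T.diagonals

/-- `t` is a triangle of the triangulation `T`: three distinct vertices each
pair of which forms a side of `T`. -/
def IsTriangle (m : ℕ) (T : Triangulation m) (t : Finset (Fin m)) : Prop :=
  ∃ a b c : Fin m, a ≠ b ∧ a ≠ c ∧ b ≠ c ∧ t = {a, b, c} ∧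
    IsSide m T {a, b} ∧ IsSide m T {a, c} ∧ IsSide m T {b, c}

/-- Two diagonals of `T` are neighbors if they both belong to `T` and lie on a
common triangle of `T`; they are independent otherwise. -/
def Neighbor (m : ℕ) (T : Triangulation m) (e₁ e₂ : Finset (Fin m)) : Prop :=
  e₁ ∈ T.diagonals ∧ e₂ ∈ T.diagonals ∧
    ∃ t, IsTriangle m T t ∧ e₁ ⊆ t ∧ e₂ ⊆ t

/-- `T'` is obtained from `T` by flipping the diagonal `e`, which removes `e`
and creates the new diagonal `e'` (necessarily the opposite diagonal of the
quadrilateral formed by the two triangles of `T` containing `e`, since `T'` is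
again a triangulation). -/
def IsFlip (m : ℕ) (T T' : Triangulation m) (e e' : Finset (Fin m)) : Prop :=
  e ∈ T.diagonals ∧ e' ∉ T.diagonals ∧
    T'.diagonals = insert e' (T.diagonals.erase e)

/-- `Ts 0, Ts 1, …, Ts r` is a sequence of triangulations in which `Ts (i+1)`
is obtained from `Ts i` by performing the flip `F i`, which removes the
diagonal `(F i).1` and creates the diagonal `(F i).2`. -/
def IsFlipSeq (m r : ℕ) (F : ℕ → Finset (Fin m) × Finset (Fin m))
    (Ts : ℕ → Triangulation m) : Prop :=
  ∀ i < r, IsFlip m (Ts i) (Ts (i + 1)) (F i).1 (F i).2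

/-- The flip distance between two triangulations: the minimum length of a flip
sequence transforming one into the other. -/
noncomputable def FlipDist (m : ℕ) (T T' : Triangulation m) : ℕ :=
  sInf {r | ∃ F Ts, IsFlipSeq m r F Ts ∧ Ts 0 = T ∧ Ts r = T'}

/-- `e` is a free-diagonal of `T` with respect to `Tfinal`: flipping `e` in `T`
creates a diagonal belonging to `Tfinal`. -/
def FreeDiagonal (m : ℕ) (T Tfinal : Triangulation m) (e : Finset (Fin m)) : Prop :=
  ∃ T' e', IsFlip m T T' e e' ∧ e' ∈ Tfinal.diagonals


/-- Arc of the DAG `D_F` associated to the flip sequence `F` with triangulation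
sequence `Ts`: there is an arc from flip `i` to flip `j` when `i < j` and the
diagonal created by flip `i` is a neighbor of the diagonal removed by flip `j`
in the triangulation `Ts j` in which flip `j` is performed. -/
def Arc (m r : ℕ) (F : ℕ → Finset (Fin m) × Finset (Fin m))
    (Ts : ℕ → Triangulation m) (i j : ℕ) : Prop :=
  i < j ∧ j < r ∧ Neighbor m (Ts j) (F i).2 (F j).1


section Arith

variable {m : ℕ}

lemma cycDist_eq (a x : Fin m) :
    cycDist m a x = if a.val ≤ x.val then x.val - a.val else x.val + m - a.val := by
  have hx := x.isLt; have ha := a.isLt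
  unfold cycDist
  rcases le_or_gt a.val x.val with h | h
  · rw [if_pos h]
    have h1 : x.val + m - a.val = (x.val - a.val) + m := by omega
    rw [h1, Nat.add_mod_right, Nat.mod_eq_of_lt (by omega)]
  · rw [if_neg (by omega)]
    exact Nat.mod_eq_of_lt (by omega)

lemma cycDist_lt (a x : Fin m) : cycDist m a x < m := by
  have hx := x.isLt; have ha := a.isLt
  rw [cycDist_eq]; split <;> omega

lemma cycDist_self (a : Fin m) : cycDist m a a = 0 := by
  rw [cycDist_eq]; simp

lemma cycDist_eq_zero_iff {a x : Fin m} : cycDist m a x = 0 ↔ x = a := by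
  have hx := x.isLt; have ha := a.isLt
  rw [cycDist_eq, Fin.ext_iff]; split <;> omega

lemma cycDist_inj {a x y : Fin m} (h : cycDist m a x = cycDist m a y) : x = y := by
  have hx := x.isLt; have hy := y.isLt; have ha := a.isLt
  rw [cycDist_eq, cycDist_eq] at h
  rw [Fin.ext_iff]
  split at h <;> split at h <;> omega

lemma cycDist_base (a b c : Fin m) :
    cycDist m b c = if cycDist m a b ≤ cycDist m a c then cycDist m a c - cycDist m a b
      else cycDist m a c + m - cycDist m a b := by
  have ha := a.isLt; have hb := b.isLt; have hc := c.isLt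
  rw [cycDist_eq b c, cycDist_eq a b, cycDist_eq a c]
  split_ifs <;> omega

lemma cycDist_rev {a b : Fin m} (h : a ≠ b) : cycDist m b a = m - cycDist m a b := by
  have ha := a.isLt; have hb := b.isLt
  have hne : a.val ≠ b.val := fun hv => h (Fin.ext hv)
  rw [cycDist_eq, cycDist_eq]
  split_ifs <;> omega

lemma ne_of_cycDist_pos {a x : Fin m} (h : 0 < cycDist m a x) : a ≠ x := by
  intro he; subst he; rw [cycDist_self] at h; omega

lemma polyAdj_iff {a b : Fin m} (hm : 2 ≤ m) :
    PolyAdj m a b ↔ cycDist m a b = 1 ∨ cycDist m b a = 1 := by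
  have key : ∀ x y : Fin m, (x.val + 1) % m = y.val ↔ cycDist m x y = 1 := by
    intro x y
    have hx := x.isLt; have hy := y.isLt
    rcases Nat.lt_or_ge (x.val + 1) m with h | h
    · rw [Nat.mod_eq_of_lt h, cycDist_eq]; split <;> omega
    · have hxm : x.val + 1 = m := by omega
      have h0 : (x.val + 1) % m = 0 := by rw [hxm]; exact Nat.mod_self m
      rw [h0, cycDist_eq]; split <;> omega
  unfold PolyAdj
  rw [key a b, key b a]

lemma pair_eq {a b c d : Fin m} (h : ({a, b} : Finset (Fin m)) = {c, d}) (hab : a ≠ b) :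
    (a = c ∧ b = d) ∨ (a = d ∧ b = c) := by
  have ha : a ∈ ({c, d} : Finset (Fin m)) := by rw [← h]; simp
  have hb : b ∈ ({c, d} : Finset (Fin m)) := by rw [← h]; simp
  simp only [Finset.mem_insert, Finset.mem_singleton] at ha hb
  rcases ha with h1 | h1 <;> rcases hb with h2 | h2
  · exact absurd (h1.trans h2.symm) hab
  · exact Or.inl ⟨h1, h2⟩
  · exact Or.inr ⟨h1, h2⟩
  · exact absurd (h1.trans h2.symm) hab

def COr (m : ℕ) (a b c d : Fin m) : Prop :=
  0 < cycDist m a c ∧ cycDist m a c < cycDist m a b ∧ cycDist m a b < cycDist m a d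

lemma cycbtw_right {a b : Fin m} (hab : a ≠ b) (x : Fin m) :
    CycBtw m b x a ↔ cycDist m a b < cycDist m a x := by
  have h1 := cycDist_base a b x
  have h2 := cycDist_rev hab
  have h3 := cycDist_lt a x
  have h4 := cycDist_lt a b
  have h5 : cycDist m a b ≠ 0 := fun hh => hab (cycDist_eq_zero_iff.mp hh).symm
  unfold CycBtw
  rw [h1, h2]
  split_ifs <;> omega

lemma cross_of_cor {a b c d : Fin m} (h : COr m a b c d) : Cross m {a, b} {c, d} := by
  obtain ⟨h1, h2, h3⟩ := h
  have hab : a ≠ b := by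
    intro he; subst he; rw [cycDist_self] at h2; omega
  exact ⟨a, b, c, d, rfl, rfl, ⟨h1, h2⟩, (cycbtw_right hab d).mpr h3⟩

lemma cross_elim {a b : Fin m} (hab : a ≠ b) {g : Finset (Fin m)} (h : Cross m {a, b} g) :
    ∃ c d, g = {c, d} ∧ COr m a b c d := by
  obtain ⟨a', b', c, d, h1, h2, h3, h4⟩ := h
  rcases pair_eq h1 hab with ⟨rfl, rfl⟩ | ⟨rfl, rfl⟩
  · exact ⟨c, d, h2, h3.1, h3.2, (cycbtw_right hab d).mp h4⟩
  · rw [cycbtw_right hab c] at h3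
    exact ⟨d, c, by rw [h2, Finset.pair_comm], h4.1, h4.2, h3⟩

lemma cor_symm {a b c d : Fin m} (h : COr m a b c d) : COr m c d b a := by
  obtain ⟨h1, h2, h3⟩ := h
  have e1 := cycDist_base a c b
  have e2 := cycDist_base a c d
  have e3 := cycDist_base a c a
  have l1 := cycDist_lt a b
  have l2 := cycDist_lt a d
  have l3 := cycDist_self a
  unfold COr
  split_ifs at e1 e2 e3 <;> omega

lemma cross_symm {e₁ e₂ : Finset (Fin m)} (h : Cross m e₁ e₂) : Cross m e₂ e₁ := by
  obtain ⟨a, b, c, d, rfl, rfl, h3, h4⟩ := h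
  obtain ⟨h3a, h3b⟩ := h3
  have hab : a ≠ b := by
    intro he; subst he
    have h0 := cycDist_self a
    omega
  have hcor : COr m a b c d := ⟨h3a, h3b, (cycbtw_right hab d).mp h4⟩
  have := cross_of_cor (cor_symm hcor)
  rwa [Finset.pair_comm b a] at this

lemma cross_irrefl (s : Finset (Fin m)) : ¬ Cross m s s := by
  intro h
  obtain ⟨a, b, c, d, h1, h2, ⟨h3a, h3b⟩, h4⟩ := h
  have h12 : ({a, b} : Finset (Fin m)) = {c, d} := h1.symm.trans h2
  have hc : c ∈ ({a, b} : Finset (Fin m)) := by rw [h12]; simp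
  simp only [Finset.mem_insert, Finset.mem_singleton] at hc
  have h0 := cycDist_self a
  rcases hc with rfl | rfl
  · omega
  · omega

end Arith

section Geo

variable {m : ℕ}

lemma edge_nocross {a b : Fin m} (hadj : PolyAdj m a b) (g : Finset (Fin m)) :
    ¬ Cross m {a, b} g := by
  intro h
  by_cases hab : a = b
  · subst hab
    obtain ⟨a', b', c, d, h1, h2, ⟨h3a, h3b⟩, h4⟩ := h
    have ha' : a' ∈ ({a, a} : Finset (Fin m)) := by rw [h1]; simp
    have hb' : b' ∈ ({a, a} : Finset (Fin m)) := by rw [h1]; simp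
    simp only [Finset.mem_insert, Finset.mem_singleton, or_self] at ha' hb'
    rw [ha'] at h3a
    rw [ha', hb'] at h3b
    have h0 := cycDist_self a
    omega
  · have hm2 : 2 ≤ m := by
      have := a.isLt; have := b.isLt
      have : a.val ≠ b.val := fun hv => hab (Fin.ext hv)
      omega
    obtain ⟨c, d, hg, h1, h2, h3⟩ := cross_elim hab h
    have hrev := cycDist_rev hab
    have hlt := cycDist_lt a d
    have hlt2 := cycDist_lt a b
    rcases (polyAdj_iff hm2).mp hadj with h4 | h4 <;> omega

lemma sides_noncross (T : Triangulation m) {s s' : Finset (Fin m)}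
    (hs : IsSide m T s) (hs' : IsSide m T s') : ¬ Cross m s s' := by
  rcases hs with ⟨a, b, hadj, rfl⟩ | hd
  · exact edge_nocross hadj s'
  · rcases hs' with ⟨a, b, hadj, rfl⟩ | hd'
    · intro h; exact edge_nocross hadj s (cross_symm h)
    · exact T.noncross s hd s' hd'

lemma diag_bounds (T : Triangulation m) {a b : Fin m}
    (h : ({a, b} : Finset (Fin m)) ∈ T.diagonals) (hab : a ≠ b) :
    2 ≤ cycDist m a b ∧ cycDist m a b ≤ m - 2 := by
  have hm2 : 2 ≤ m := by
    have := a.isLt; have := b.isLt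
    have : a.val ≠ b.val := fun hv => hab (Fin.ext hv)
    omega
  obtain ⟨a', b', hab', hP', he⟩ := T.isDiagonal _ h
  have hP : ¬ PolyAdj m a b := by
    rcases pair_eq he hab with ⟨rfl, rfl⟩ | ⟨rfl, rfl⟩
    · exact hP'
    · intro hc; exact hP' (by unfold PolyAdj at hc ⊢; tauto)
  rw [polyAdj_iff hm2] at hP
  push_neg at hP
  have hrev := cycDist_rev hab
  have hne0 : cycDist m a b ≠ 0 := fun hh => hab (cycDist_eq_zero_iff.mp hh).symm
  have hlt := cycDist_lt a b
  omega

/-- The vertex at forward distance `k` from `a`. -/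
def vAt (a : Fin m) (k : ℕ) : Fin m := ⟨(a.val + k) % m, Nat.mod_lt _ a.pos⟩

lemma cycDist_vAt (a : Fin m) {k : ℕ} (hk : k < m) : cycDist m a (vAt a k) = k := by
  have ha := a.isLt
  rw [cycDist_eq]
  show (if a.val ≤ (a.val + k) % m then (a.val + k) % m - a.val
    else (a.val + k) % m + m - a.val) = k
  rcases Nat.lt_or_ge (a.val + k) m with h | h
  · rw [Nat.mod_eq_of_lt h]; split <;> omega
  · have hmod : (a.val + k) % m = a.val + k - m := by
      rw [Nat.mod_eq_sub_mod (by omega), Nat.mod_eq_of_lt (by omega)]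
    rw [hmod]; split <;> omega

lemma apex_ex (T : Triangulation m) {a b : Fin m} (hside : IsSide m T {a, b})
    (h2 : 2 ≤ cycDist m a b) :
    ∃ p : Fin m, 0 < cycDist m a p ∧ cycDist m a p < cycDist m a b ∧
      IsSide m T {a, p} ∧ IsSide m T {p, b} := by
  classical
  have hab : a ≠ b := by
    intro h; subst h; rw [cycDist_self] at h2; omega
  have hβm : cycDist m a b < m := cycDist_lt a b
  have hm2 : 2 ≤ m := by omega
  set Q : Finset (Fin m) := Finset.univ.filter
    (fun x => 0 < cycDist m a x ∧ cycDist m a x < cycDist m a b ∧ IsSide m T {x, b}) with hQ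
  have hQne : Q.Nonempty := by
    refine ⟨vAt a (cycDist m a b - 1), ?_⟩
    rw [hQ, Finset.mem_filter]
    have hd : cycDist m a (vAt a (cycDist m a b - 1)) = cycDist m a b - 1 :=
      cycDist_vAt a (by omega)
    refine ⟨Finset.mem_univ _, by omega, by omega, ?_⟩
    left
    refine ⟨vAt a (cycDist m a b - 1), b, ?_, rfl⟩
    rw [polyAdj_iff hm2]
    left
    rw [cycDist_base a (vAt a (cycDist m a b - 1)) b]
    rw [hd]
    split <;> omega
  obtain ⟨p, hpQ, hpmin⟩ := Q.exists_min_image (fun x => cycDist m a x) hQne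
  rw [hQ, Finset.mem_filter] at hpQ
  obtain ⟨-, hp1, hp2, hp3⟩ := hpQ
  refine ⟨p, hp1, hp2, ?_, hp3⟩
  by_cases hadj : PolyAdj m a p
  · exact Or.inl ⟨a, p, hadj, rfl⟩
  · right
    have hap : a ≠ p := ne_of_cycDist_pos hp1
    apply T.maximal
    · exact ⟨a, p, hap, hadj, rfl⟩
    · intro g hg
      by_contra hc
      obtain ⟨u, v, hguv, hu1, hu2, hv1⟩ := cross_elim hap hc
      have hnc1 : ¬ Cross m {a, b} g := sides_noncross T hside (Or.inr hg)
      have hlu := cycDist_lt a u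
      have hlv := cycDist_lt a v
      have hvb : cycDist m a v ≤ cycDist m a b := by
        by_contra hgt
        exact hnc1 (by rw [hguv]; exact cross_of_cor ⟨hu1, by omega, by omega⟩)
      by_cases hveqb : cycDist m a v = cycDist m a b
      · have hvb' : v = b := cycDist_inj hveqb
        subst hvb'
        have huQ : u ∈ Q := by
          rw [hQ, Finset.mem_filter]
          exact ⟨Finset.mem_univ _, hu1, by omega, Or.inr (hguv ▸ hg)⟩
        have := hpmin u huQ
        omega
      · have hcross : Cross m {p, b} g := by
          rw [hguv, Finset.pair_comm u v]
          apply cross_of_cor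
          have e1 := cycDist_base a p v
          have e2 := cycDist_base a p b
          have e3 := cycDist_base a p u
          unfold COr
          split_ifs at e1 e2 e3 <;> omega
        exact sides_noncross T hp3 (Or.inr hg) hcross

end Geo

section Flip

variable {m : ℕ}

lemma flip_char (T : Triangulation m) {a b p q : Fin m} {h : Finset (Fin m)}
    (hpa : 0 < cycDist m a p) (hpb : cycDist m a p < cycDist m a b)
    (hqb : cycDist m a b < cycDist m a q)
    (hsap : IsSide m T {a, p}) (hspb : IsSide m T {p, b})
    (hsbq : IsSide m T {b, q}) (hsqa : IsSide m T {q, a})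
    (hab : a ≠ b)
    (hcr : Cross m {a, b} h)
    (hnon : ∀ g ∈ T.diagonals, g ≠ ({a, b} : Finset (Fin m)) → ¬ Cross m h g) :
    h = {p, q} := by
  obtain ⟨u, v, rfl, hu1, hu2, hv1⟩ := cross_elim hab hcr
  have hlu := cycDist_lt a u
  have hlv := cycDist_lt a v
  have hlq := cycDist_lt a q
  have hlb := cycDist_lt a b
  have h0 := cycDist_self a
  have hap : a ≠ p := ne_of_cycDist_pos hpa
  have hpbne : p ≠ b := fun hh => by rw [hh] at hpb; omega
  have hqbne : q ≠ b := fun hh => by rw [hh] at hqb; omega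
  have hqane : q ≠ a := fun hh => by rw [hh] at hqb; omega
  have hne_ap : ({a, p} : Finset (Fin m)) ≠ {a, b} := by
    intro he
    rcases pair_eq he hap with ⟨-, h2⟩ | ⟨h2, -⟩
    · rw [h2] at hpb; omega
    · exact hab h2
  have hne_pb : ({p, b} : Finset (Fin m)) ≠ {a, b} := by
    intro he
    rcases pair_eq he hpbne with ⟨h2, -⟩ | ⟨h2, -⟩
    · rw [← h2] at hpa; omega
    · exact hpbne h2
  have hne_bq : ({b, q} : Finset (Fin m)) ≠ {a, b} := by
    intro he
    rcases pair_eq he hqbne.symm with ⟨h2, -⟩ | ⟨-, h2⟩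
    · exact hab h2.symm
    · rw [h2] at hqb; omega
  have hne_qa : ({q, a} : Finset (Fin m)) ≠ {a, b} := by
    intro he
    rcases pair_eq he hqane with ⟨-, h2⟩ | ⟨h2, -⟩
    · exact hab h2
    · exact hqbne h2
  have contra : ∀ s : Finset (Fin m), IsSide m T s → s ≠ ({a, b} : Finset (Fin m)) →
      Cross m s {u, v} → False := by
    intro s hs hne hC
    rcases hs with ⟨x, y, hadj, rfl⟩ | hd
    · exact edge_nocross hadj _ hC
    · exact hnon s hd hne (cross_symm hC)
  have hup : u = p := by
    by_contra hne
    have hne' : cycDist m a u ≠ cycDist m a p := fun hh => hne (cycDist_inj hh)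
    rcases lt_or_gt_of_ne hne' with hlt | hgt
    · exact contra _ hsap hne_ap (cross_of_cor ⟨hu1, hlt, by omega⟩)
    · refine contra _ hspb hne_pb ?_
      apply cross_of_cor
      have e1 := cycDist_base a p u
      have e2 := cycDist_base a p b
      have e3 := cycDist_base a p v
      unfold COr
      split_ifs at e1 e2 e3 <;> omega
  have hvq : v = q := by
    by_contra hne
    have hne' : cycDist m a v ≠ cycDist m a q := fun hh => hne (cycDist_inj hh)
    rcases lt_or_gt_of_ne hne' with hlt | hgt
    · refine contra _ hsbq hne_bq ?_
      rw [Finset.pair_comm u v, hup]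
      apply cross_of_cor
      have e1 := cycDist_base a b v
      have e2 := cycDist_base a b q
      have e3 := cycDist_base a b p
      unfold COr
      split_ifs at e1 e2 e3 <;> omega
    · refine contra _ hsqa hne_qa ?_
      rw [Finset.pair_comm u v, hup]
      apply cross_of_cor
      have e1 := cycDist_base a q v
      have e2 := cycDist_base a q a
      have e3 := cycDist_base a q p
      unfold COr
      split_ifs at e1 e2 e3 <;> omega
  rw [hup, hvq]

lemma flip_new (T : Triangulation m) {a b p q : Fin m}
    (hmem : ({a, b} : Finset (Fin m)) ∈ T.diagonals) (hab : a ≠ b)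
    (hpa : 0 < cycDist m a p) (hpb : cycDist m a p < cycDist m a b)
    (hqb : cycDist m a b < cycDist m a q)
    (hsap : IsSide m T {a, p}) (hspb : IsSide m T {p, b})
    (hsbq : IsSide m T {b, q}) (hsqa : IsSide m T {q, a})
    (hpq : IsDiagonal m {p, q}) :
    ∃ T' : Triangulation m, T'.diagonals = insert {p, q} (T.diagonals.erase {a, b}) := by
  have hlb := cycDist_lt a b
  have hlq := cycDist_lt a q
  have h0 := cycDist_self a
  have hpq' : p ≠ q := fun hh => by rw [hh] at hpb; omega
  have key : ∀ g ∈ T.diagonals, g ≠ ({a, b} : Finset (Fin m)) → ¬ Cross m {p, q} g := by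
    intro g hg hne hC
    obtain ⟨u, v, hguv, h1, h2, h3⟩ := cross_elim hpq' hC
    have hlu := cycDist_lt a u
    have hlv := cycDist_lt a v
    have e1 := cycDist_base a p u
    have e2 := cycDist_base a p q
    have e3 := cycDist_base a p v
    have hau1 : cycDist m a p < cycDist m a u ∧ cycDist m a u < cycDist m a q := by
      split_ifs at e1 e2 e3 <;> omega
    have hv : cycDist m a q < cycDist m a v ∨ cycDist m a v < cycDist m a p := by
      split_ifs at e1 e2 e3 <;> omega
    obtain ⟨hau, hau'⟩ := hau1
    have contra : ∀ s : Finset (Fin m), IsSide m T s → Cross m s g → False := by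
      intro s hs hC2
      exact sides_noncross T hs (Or.inr hg) hC2
    rcases lt_trichotomy (cycDist m a u) (cycDist m a b) with hub | hub | hub
    · refine contra _ hspb ?_
      rw [hguv]
      apply cross_of_cor
      have f1 := cycDist_base a p b
      unfold COr
      split_ifs at e1 e3 f1 <;> omega
    · have hub' : u = b := cycDist_inj hub
      by_cases hva : v = a
      · refine hne ?_
        rw [hguv, hub', hva]
        exact Finset.pair_comm b a
      · have hva' : 0 < cycDist m a v := by
          rcases Nat.eq_zero_or_pos (cycDist m a v) with hz | hz
          · exact absurd (cycDist_eq_zero_iff.mp hz) hva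
          · exact hz
        rcases hv with hv | hv
        · refine contra _ hsqa ?_
          rw [hguv, hub', Finset.pair_comm b v]
          apply cross_of_cor
          have f1 := cycDist_base a q v
          have f2 := cycDist_base a q a
          have f3 := cycDist_base a q b
          unfold COr
          split_ifs at f1 f2 f3 <;> omega
        · refine contra _ hsap ?_
          rw [hguv, hub', Finset.pair_comm b v]
          apply cross_of_cor
          exact ⟨hva', by omega, by omega⟩
    · refine contra _ hsbq ?_
      rw [hguv]
      apply cross_of_cor
      have f1 := cycDist_base a b u
      have f2 := cycDist_base a b q
      have f3 := cycDist_base a b v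
      unfold COr
      split_ifs at f1 f2 f3 <;> omega
  have hPQcross : Cross m {a, b} {p, q} := cross_of_cor ⟨hpa, hpb, hqb⟩
  refine ⟨⟨insert {p, q} (T.diagonals.erase {a, b}), ?_, ?_, ?_⟩, rfl⟩
  · intro e he
    rcases Finset.mem_insert.mp he with rfl | he'
    · exact hpq
    · exact T.isDiagonal e (Finset.mem_of_mem_erase he')
  · intro e₁ h1 e₂ h2
    rcases Finset.mem_insert.mp h1 with rfl | h1'
    · rcases Finset.mem_insert.mp h2 with rfl | h2'
      · exact cross_irrefl _
      · exact key e₂ (Finset.mem_of_mem_erase h2') ((Finset.mem_erase.mp h2').1)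
    · rcases Finset.mem_insert.mp h2 with rfl | h2'
      · intro hC
        exact key e₁ (Finset.mem_of_mem_erase h1') ((Finset.mem_erase.mp h1').1) (cross_symm hC)
      · exact T.noncross e₁ (Finset.mem_of_mem_erase h1') e₂ (Finset.mem_of_mem_erase h2')
  · intro f hfd hfnc
    by_cases hfe : Cross m {a, b} f
    · have hf : f = {p, q} :=
        flip_char T hpa hpb hqb hsap hspb hsbq hsqa hab hfe (fun g hg hne =>
          hfnc g (Finset.mem_insert_of_mem (Finset.mem_erase.mpr ⟨hne, hg⟩)))
      rw [hf]
      exact Finset.mem_insert_self _ _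
    · have hfT : f ∈ T.diagonals := by
        apply T.maximal f hfd
        intro g hg
        by_cases hge : g = ({a, b} : Finset (Fin m))
        · subst hge; intro hC; exact hfe (cross_symm hC)
        · exact hfnc g (Finset.mem_insert_of_mem (Finset.mem_erase.mpr ⟨hge, hg⟩))
      have hfne : f ≠ ({a, b} : Finset (Fin m)) := by
        intro hh; subst hh
        exact hfnc {p, q} (Finset.mem_insert_self _ _) hPQcross
      exact Finset.mem_insert_of_mem (Finset.mem_erase.mpr ⟨hfne, hfT⟩)

end Flip

/-- Let `F` be a flip sequence realizing a shortest path
`Tinit = Ts 0 → Ts 1 → ⋯ → Ts r = Tfinal` (here the `i`-th flip, `0`-indexed,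
is performed in `Ts i` and yields `Ts (i+1)`). Suppose `e` is a diagonal of
both `Ts i` and `Ts (i+1)`, `e` is not a free-diagonal of `Ts i` with respect
to `Tfinal`, and `e` is a free-diagonal of `Ts (i+1)` with respect to
`Tfinal`. Then `(F i).2`, the diagonal created by this flip, is a neighbor of
`e` in `Ts (i+1)`. -/
theorem new_free_diagonal_neighbor (m : ℕ) (hm : 3 ≤ m)
    (Tinit Tfinal : Triangulation m)
    (r : ℕ) (F : ℕ → Finset (Fin m) × Finset (Fin m)) (Ts : ℕ → Triangulation m)
    (hseq : IsFlipSeq m r F Ts) (h0 : Ts 0 = Tinit) (hr : Ts r = Tfinal)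
    (hmin : r = FlipDist m Tinit Tfinal)
    (i : ℕ) (hi : i < r) (e : Finset (Fin m))
    (he₁ : e ∈ (Ts i).diagonals) (he₂ : e ∈ (Ts (i + 1)).diagonals)
    (hnotfree : ¬ FreeDiagonal m (Ts i) Tfinal e)
    (hfree : FreeDiagonal m (Ts (i + 1)) Tfinal e) :
    Neighbor m (Ts (i + 1)) (F i).2 e := by
  obtain ⟨hd1, hd2, hTT⟩ := hseq i hi
  obtain ⟨T₃, e'', ⟨he3, he''3, hT3⟩, he''f⟩ := hfree
  obtain ⟨a, b, hab, hnadj, rfl⟩ := (Ts (i + 1)).isDiagonal e he₂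
  obtain ⟨hb2, hbm⟩ := diag_bounds (Ts (i + 1)) he₂ hab
  have hlb := cycDist_lt a b
  have hz := cycDist_self a
  obtain ⟨p, hpa, hpb, hsap, hspb⟩ := apex_ex (Ts (i + 1)) (Or.inr he₂) hb2
  have hside' : IsSide m (Ts (i + 1)) {b, a} := by
    rw [Finset.pair_comm]; exact Or.inr he₂
  have hrev := cycDist_rev hab
  obtain ⟨q, hq1, hq2, hsbq, hsqa⟩ := apex_ex (Ts (i + 1)) hside' (by omega)
  have hqb : cycDist m a b < cycDist m a q := by
    have e1 := cycDist_base a b q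
    have hlq := cycDist_lt a q
    split_ifs at e1 <;> omega
  have he''T3 : e'' ∈ T₃.diagonals := by rw [hT3]; exact Finset.mem_insert_self _ _
  have heT3 : ({a, b} : Finset (Fin m)) ∉ T₃.diagonals := by
    rw [hT3]
    intro hmem
    rcases Finset.mem_insert.mp hmem with hh | hh
    · exact he''3 (hh ▸ he₂)
    · exact (Finset.mem_erase.mp hh).1 rfl
  have hcr : Cross m {a, b} e'' := by
    by_contra hC
    apply heT3
    apply T₃.maximal _ ((Ts (i + 1)).isDiagonal _ he₂)
    intro g hg
    rw [hT3] at hg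
    rcases Finset.mem_insert.mp hg with rfl | hg'
    · exact hC
    · exact (Ts (i + 1)).noncross _ he₂ _ (Finset.mem_of_mem_erase hg')
  have he''eq : e'' = {p, q} := by
    apply flip_char (Ts (i + 1)) hpa hpb hqb hsap hspb hsbq hsqa hab hcr
    intro g hg hne hC
    have hgT3 : g ∈ T₃.diagonals := by
      rw [hT3]
      exact Finset.mem_insert_of_mem (Finset.mem_erase.mpr ⟨hne, hg⟩)
    exact T₃.noncross _ he''T3 _ hgT3 hC
  have hd'mem : (F i).2 ∈ (Ts (i + 1)).diagonals := by
    rw [hTT]; exact Finset.mem_insert_self _ _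
  have hapne : a ≠ p := ne_of_cycDist_pos hpa
  have hbpne : b ≠ p := fun hh => by rw [← hh] at hpb; omega
  have haqne : a ≠ q := fun hh => by rw [← hh] at hqb; omega
  have hbqne : b ≠ q := fun hh => by rw [← hh] at hqb; omega
  by_contra hN
  have hsbp : IsSide m (Ts (i + 1)) {b, p} := by
    rw [Finset.pair_comm]; exact hspb
  have hsaq : IsSide m (Ts (i + 1)) {a, q} := by
    rw [Finset.pair_comm]; exact hsqa
  have mkTri : ∀ x : Fin m, a ≠ x → b ≠ x → IsSide m (Ts (i + 1)) {a, x} →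
      IsSide m (Ts (i + 1)) {b, x} → IsTriangle m (Ts (i + 1)) {a, b, x} :=
    fun x h1 h2 s1 s2 => ⟨a, b, x, hab, h1, h2, rfl, Or.inr he₂, s1, s2⟩
  have hsubp1 : ({a, p} : Finset (Fin m)) ⊆ {a, b, p} := by
    intro z hz; simp only [Finset.mem_insert, Finset.mem_singleton] at hz ⊢; tauto
  have hsubp2 : ({p, b} : Finset (Fin m)) ⊆ {a, b, p} := by
    intro z hz; simp only [Finset.mem_insert, Finset.mem_singleton] at hz ⊢; tauto
  have hsubp3 : ({a, b} : Finset (Fin m)) ⊆ {a, b, p} := by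
    intro z hz; simp only [Finset.mem_insert, Finset.mem_singleton] at hz ⊢; tauto
  have hsubq1 : ({b, q} : Finset (Fin m)) ⊆ {a, b, q} := by
    intro z hz; simp only [Finset.mem_insert, Finset.mem_singleton] at hz ⊢; tauto
  have hsubq2 : ({q, a} : Finset (Fin m)) ⊆ {a, b, q} := by
    intro z hz; simp only [Finset.mem_insert, Finset.mem_singleton] at hz ⊢; tauto
  have hsubq3 : ({a, b} : Finset (Fin m)) ⊆ {a, b, q} := by
    intro z hz; simp only [Finset.mem_insert, Finset.mem_singleton] at hz ⊢; tauto
  have hne1 : ({a, p} : Finset (Fin m)) ≠ (F i).2 := fun hh =>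
    hN ⟨hd'mem, he₂, {a, b, p}, mkTri p hapne hbpne hsap hsbp, hh ▸ hsubp1, hsubp3⟩
  have hne2 : ({p, b} : Finset (Fin m)) ≠ (F i).2 := fun hh =>
    hN ⟨hd'mem, he₂, {a, b, p}, mkTri p hapne hbpne hsap hsbp, hh ▸ hsubp2, hsubp3⟩
  have hne3 : ({b, q} : Finset (Fin m)) ≠ (F i).2 := fun hh =>
    hN ⟨hd'mem, he₂, {a, b, q}, mkTri q haqne hbqne hsaq hsbq, hh ▸ hsubq1, hsubq3⟩
  have hne4 : ({q, a} : Finset (Fin m)) ≠ (F i).2 := fun hh =>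
    hN ⟨hd'mem, he₂, {a, b, q}, mkTri q haqne hbqne hsaq hsbq, hh ▸ hsubq2, hsubq3⟩
  have sideT : ∀ s : Finset (Fin m), IsSide m (Ts (i + 1)) s → s ≠ (F i).2 →
      IsSide m (Ts i) s := by
    intro s hs hne
    rcases hs with ⟨x, y, hadj, rfl⟩ | hd
    · exact Or.inl ⟨x, y, hadj, rfl⟩
    · rw [hTT] at hd
      rcases Finset.mem_insert.mp hd with rfl | hd'
      · exact absurd rfl hne
      · exact Or.inr (Finset.mem_of_mem_erase hd')
  obtain ⟨T₅, hT₅⟩ := flip_new (Ts i) he₁ hab hpa hpb hqb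
    (sideT _ hsap hne1) (sideT _ hspb hne2) (sideT _ hsbq hne3) (sideT _ hsqa hne4)
    (he''eq ▸ T₃.isDiagonal _ he''T3)
  have hpqnot : ({p, q} : Finset (Fin m)) ∉ (Ts i).diagonals := fun hh =>
    (Ts i).noncross _ he₁ _ hh (cross_of_cor ⟨hpa, hpb, hqb⟩)
  exact hnotfree ⟨T₅, {p, q}, ⟨he₁, hpqnot, hT₅⟩, he''eq ▸ he''f⟩
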